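/- If a coordinate set I is stochastically sufficient, then I contains every relevant coordinate of the underlying static decision problem: for every coordinate i such that there exist states s, t with s_j = t_j for all j ≠ i and Opt(s) ≠ Opt(t), one has i ∈ I. -/
import Mathlib


/-- Full-information optimizer: actions maximizing pointwise utility at state `s`. -/
def Opt {n : ℕ} {A : Type*} {X : Fin n → Type*}
    (U : A → (∀ i, X i) → ℝ) (s : ∀ i, X i) : Set A :=
  {a | ∀ b, U b s ≤ U a s}

/-- Conditional (unnormalized) expected utility of action `a` over the `I`-fiber of `s`. -/
noncomputable def condEU {n : ℕ} {A : Type*} {X : Fin n → Type*}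
    [∀ i, Fintype (X i)] [∀ i, DecidableEq (X i)]
    (U : A → (∀ i, X i) → ℝ) (P : (∀ i, X i) → ℝ)
    (I : Finset (Fin n)) (s : ∀ i, X i) (a : A) : ℝ :=
  ∑ t ∈ Finset.univ.filter (fun t : ∀ i, X i => ∀ i ∈ I, t i = s i), P t * U a t

/-- Conditional optimizer: actions maximizing conditional expected utility on the `I`-fiber. -/
noncomputable def OptS {n : ℕ} {A : Type*} {X : Fin n → Type*}
    [∀ i, Fintype (X i)] [∀ i, DecidableEq (X i)]
    (U : A → (∀ i, X i) → ℝ) (P : (∀ i, X i) → ℝ)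
    (I : Finset (Fin n)) (s : ∀ i, X i) : Set A :=
  {a | ∀ b, condEU U P I s b ≤ condEU U P I s a}

/-- `I` is statically sufficient: states agreeing on `I` have the same optimizer. -/
def StaticSufficient {n : ℕ} {A : Type*} {X : Fin n → Type*}
    (U : A → (∀ i, X i) → ℝ) (I : Finset (Fin n)) : Prop :=
  ∀ s t : ∀ i, X i, (∀ i ∈ I, s i = t i) → Opt U s = Opt U t

/-- `I` is stochastically sufficient: the conditional optimizer agrees with the
full-information optimizer at every state. -/
def StochSufficient {n : ℕ} {A : Type*} {X : Fin n → Type*}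
    [∀ i, Fintype (X i)] [∀ i, DecidableEq (X i)]
    (U : A → (∀ i, X i) → ℝ) (P : (∀ i, X i) → ℝ) (I : Finset (Fin n)) : Prop :=
  ∀ s : ∀ i, X i, OptS U P I s = Opt U s

/-- `I` is stochastically decisive: every positive-probability state's observed fiber
has a unique conditional optimal action. -/
def StochDecisive {n : ℕ} {A : Type*} {X : Fin n → Type*}
    [∀ i, Fintype (X i)] [∀ i, DecidableEq (X i)]
    (U : A → (∀ i, X i) → ℝ) (P : (∀ i, X i) → ℝ) (I : Finset (Fin n)) : Prop :=
  ∀ s : ∀ i, X i, 0 < P s → ∃ a : A, OptS U P I s = {a}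

theorem stochastic_sufficient_contains_relevant
    {n : ℕ} {A : Type*} {X : Fin n → Type*}
    [Fintype A] [Nonempty A] [∀ i, Fintype (X i)] [∀ i, Nonempty (X i)]
    [∀ i, DecidableEq (X i)]
    (U : A → (∀ i, X i) → ℝ) (P : (∀ i, X i) → ℝ)
    (hP0 : ∀ s, 0 ≤ P s) (hP1 : ∑ s : ∀ i, X i, P s = 1)
    (I : Finset (Fin n))
    (hstoch : StochSufficient U P I) :
    ∀ i : Fin n,
      (∃ s t : ∀ j, X j, (∀ j : Fin n, j ≠ i → s j = t j) ∧ Opt U s ≠ Opt U t) →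
      i ∈ I := by
  intro i ⟨s, t, hagree, hne⟩
  by_contra hiI
  apply hne
  have key : ∀ j ∈ I, s j = t j := fun j hj => hagree j (fun h => hiI (h ▸ hj))
  have hceq : condEU U P I s = condEU U P I t := by
    funext a
    unfold condEU
    congr 1
    apply Finset.filter_congr
    intro u _
    constructor <;> intro h j hj <;> rw [h j hj] <;> [exact key j hj; exact (key j hj).symm]
  rw [← hstoch s, ← hstoch t]
  unfold OptS
  rw [hceq]
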